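/- Let d ≥ 2 and let (E_1, ..., E_n) be a POVM on C^d ⊗ C^d with the property that for every PPT state ρ and every NPT state σ there exists an index j with tr(ρE_j) ≠ tr(σE_j). Then (E_1, ..., E_n) is informationally complete, i.e., any two states ρ, σ on C^d ⊗ C^d satisfying tr(ρE_j) = tr(σE_j) for all j are equal. -/

import Mathlib

open Matrix
open scoped ComplexOrder ComplexInnerProductSpace

noncomputable section

/-- A state (density matrix): positive semidefinite with trace 1. -/
def IsState {n : Type*} [Fintype n] (ρ : Matrix n n ℂ) : Prop :=
  ρ.PosSemidef ∧ ρ.trace = 1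

/-- Partial transpose with respect to the second tensor factor. -/
def ptrans {d : ℕ} (ρ : Matrix (Fin d × Fin d) (Fin d × Fin d) ℂ) :
    Matrix (Fin d × Fin d) (Fin d × Fin d) ℂ :=
  Matrix.of fun p q => ρ (p.1, q.2) (q.1, p.2)

namespace PPTaux

variable {d : ℕ}

@[simp] lemma ptrans_apply (A : Matrix (Fin d × Fin d) (Fin d × Fin d) ℂ) (p q : Fin d × Fin d) :
    ptrans A p q = A (p.1, q.2) (q.1, p.2) := rfl

lemma ptrans_ptrans (A : Matrix (Fin d × Fin d) (Fin d × Fin d) ℂ) :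
    ptrans (ptrans A) = A := by
  ext ⟨i, k⟩ ⟨j, l⟩; rfl

lemma ptrans_add (A B : Matrix (Fin d × Fin d) (Fin d × Fin d) ℂ) :
    ptrans (A + B) = ptrans A + ptrans B := by
  ext ⟨i, k⟩ ⟨j, l⟩; rfl

lemma ptrans_sub (A B : Matrix (Fin d × Fin d) (Fin d × Fin d) ℂ) :
    ptrans (A - B) = ptrans A - ptrans B := by
  ext ⟨i, k⟩ ⟨j, l⟩; rfl

lemma ptrans_smul (c : ℂ) (A : Matrix (Fin d × Fin d) (Fin d × Fin d) ℂ) :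
    ptrans (c • A) = c • ptrans A := by
  ext ⟨i, k⟩ ⟨j, l⟩; rfl

lemma ptrans_one : ptrans (1 : Matrix (Fin d × Fin d) (Fin d × Fin d) ℂ) = 1 := by
  ext ⟨i, k⟩ ⟨j, l⟩
  simp only [ptrans_apply, Matrix.one_apply, Prod.mk.injEq, Prod.ext_iff]
  by_cases h1 : i = j <;> by_cases h2 : k = l <;> simp [h1, h2, eq_comm]

lemma ptrans_trace (A : Matrix (Fin d × Fin d) (Fin d × Fin d) ℂ) :
    (ptrans A).trace = A.trace := by
  simp [Matrix.trace, Matrix.diag]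

lemma ptrans_conjTranspose (A : Matrix (Fin d × Fin d) (Fin d × Fin d) ℂ) :
    ptrans Aᴴ = (ptrans A)ᴴ := by
  ext ⟨i, k⟩ ⟨j, l⟩; rfl

lemma ptrans_isHermitian {A : Matrix (Fin d × Fin d) (Fin d × Fin d) ℂ}
    (hA : A.IsHermitian) : (ptrans A).IsHermitian := by
  unfold Matrix.IsHermitian
  rw [← ptrans_conjTranspose, hA.eq]

end PPTaux

namespace PPTaux2

variable {m : Type*} [Fintype m]

lemma star_quad {M : Matrix m m ℂ} (hM : M.IsHermitian) (x : m → ℂ) :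
    star (star x ⬝ᵥ M *ᵥ x) = star x ⬝ᵥ M *ᵥ x := by
  calc star (star x ⬝ᵥ M *ᵥ x) = star (M *ᵥ x) ⬝ᵥ x := by
        rw [star_dotProduct, star_star]
    _ = (star x ᵥ* Mᴴ) ⬝ᵥ x := by rw [star_mulVec]
    _ = star x ⬝ᵥ Mᴴ *ᵥ x := by rw [← dotProduct_mulVec]
    _ = star x ⬝ᵥ M *ᵥ x := by rw [hM.eq]

lemma quad_im_zero {M : Matrix m m ℂ} (hM : M.IsHermitian) (x : m → ℂ) :
    (star x ⬝ᵥ M *ᵥ x).im = 0 := by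
  have h := congrArg Complex.im (star_quad hM x)
  simp only [Complex.star_def, Complex.conj_im] at h
  linarith

lemma posSemidef_iff_re {M : Matrix m m ℂ} (hM : M.IsHermitian) :
    M.PosSemidef ↔ ∀ x : m → ℂ, 0 ≤ (star x ⬝ᵥ M *ᵥ x).re := by
  constructor
  · intro h x
    have := h.dotProduct_mulVec_nonneg x
    rw [Complex.le_def] at this
    simpa using this.1
  · intro h
    refine Matrix.PosSemidef.of_dotProduct_mulVec_nonneg hM fun x => ?_
    rw [Complex.le_def]
    exact ⟨by simpa using h x, by simp [quad_im_zero hM x]⟩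

lemma posDef_iff_re {M : Matrix m m ℂ} (hM : M.IsHermitian) :
    M.PosDef ↔ ∀ x : m → ℂ, x ≠ 0 → 0 < (star x ⬝ᵥ M *ᵥ x).re := by
  constructor
  · intro h x hx
    have := h.dotProduct_mulVec_pos hx
    rw [Complex.lt_def] at this
    simpa using this.1
  · intro h
    refine Matrix.PosDef.of_dotProduct_mulVec_pos hM fun x hx => ?_
    rw [Complex.lt_def]
    exact ⟨by simpa using h x hx, by simp [quad_im_zero hM x]⟩

lemma psd_trace_zero [DecidableEq m] {M : Matrix m m ℂ} (hM : M.PosSemidef)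
    (ht : M.trace = 0) : M = 0 := by
  have hdiag : ∀ i, M i i = 0 := by
    have h1 : ∀ i : m, 0 ≤ M i i := fun i => by
      simpa [dotProduct, Pi.single_apply, mulVec, Finset.sum_ite_eq] using hM.dotProduct_mulVec_nonneg (Pi.single i 1)
    intro i
    have := (Finset.sum_eq_zero_iff_of_nonneg (fun i _ => h1 i)).mp ht i (Finset.mem_univ i)
    exact this
  have hcol : ∀ i : m, M *ᵥ Pi.single i 1 = 0 := by
    intro i
    apply (hM.dotProduct_mulVec_zero_iff (Pi.single i 1)).mp
    simpa [dotProduct, Pi.single_apply, mulVec, Finset.sum_ite_eq] using hdiag i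
  ext i j
  have := congrFun (hcol j) i
  simpa [mulVec, dotProduct, Pi.single_apply] using this

end PPTaux2

namespace PPTaux3

variable {m : Type*} [Fintype m] [DecidableEq m] [Nonempty m]

lemma exists_psd_sub_smul {M : Matrix m m ℂ} (hM : M.PosDef) :
    ∃ c : ℝ, 0 < c ∧ (M - (c : ℂ) • 1).PosSemidef := by
  have hH : M.IsHermitian := hM.1
  set U : Matrix m m ℂ := (hH.eigenvectorUnitary : Matrix m m ℂ)
  have hUU : U * star U = 1 := (Matrix.mem_unitaryGroup_iff).mp hH.eigenvectorUnitary.2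
  set c : ℝ := Finset.univ.inf' Finset.univ_nonempty hH.eigenvalues with hc
  have hcpos : 0 < c := by
    rw [hc]
    apply (Finset.lt_inf'_iff _).mpr
    intro i _
    exact hM.eigenvalues_pos i
  refine ⟨c, hcpos, ?_⟩
  have hspec := hH.spectral_theorem
  have hdiag : Matrix.diagonal (fun i => ((hH.eigenvalues i - c : ℝ) : ℂ)) =
      Matrix.diagonal ((RCLike.ofReal : ℝ → ℂ) ∘ hH.eigenvalues) - (c : ℂ) • 1 := by
    ext i j
    rcases eq_or_ne i j with rfl | h
    · simp [Matrix.one_apply_eq, Complex.ofReal_sub]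
    · simp [Matrix.diagonal_apply_ne _ h, Matrix.one_apply_ne h]
  have key : M - (c : ℂ) • 1 =
      U * Matrix.diagonal (fun i => ((hH.eigenvalues i - c : ℝ) : ℂ)) * star U := by
    conv_lhs => rw [hspec, Unitary.conjStarAlgAut_apply]
    rw [hdiag, Matrix.mul_sub, Matrix.sub_mul, Matrix.mul_smul, Matrix.mul_one,
      Matrix.smul_mul, hUU]
  rw [key]
  have hps : (Matrix.diagonal (fun i => ((hH.eigenvalues i - c : ℝ) : ℂ))).PosSemidef := by
    apply Matrix.posSemidef_diagonal_iff.mpr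
    intro i
    have : c ≤ hH.eigenvalues i := Finset.inf'_le _ (Finset.mem_univ i)
    rw [Complex.le_def]
    constructor
    · simpa using by linarith
    · simp
  have := hps.mul_mul_conjTranspose_same U
  rwa [← Matrix.star_eq_conjTranspose] at this

end PPTaux3

namespace PPTaux4

variable {d : ℕ}

lemma euclid_norm_sq (x : EuclideanSpace ℂ (Fin d)) : ‖x‖ ^ 2 = ∑ l, ‖x l‖ ^ 2 := by
  rw [EuclideanSpace.norm_eq]
  rw [Real.sq_sqrt (by positivity)]

lemma rowsum_strict (v : Fin d × Fin d → ℂ) (i0 i1 : Fin d) (l0 l1 : Fin d)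
    (hm : v (i0, l0) * v (i1, l1) - v (i0, l1) * v (i1, l0) ≠ 0)
    (u : Fin d → ℂ) (hu : u ≠ 0) :
    ∑ i, ‖∑ l, v (i, l) * u l‖ ^ 2 <
      (∑ p : Fin d × Fin d, ‖v p‖ ^ 2) * (∑ l, ‖u l‖ ^ 2) := by
  set a : Fin d → EuclideanSpace ℂ (Fin d) :=
    fun i => (WithLp.equiv 2 (Fin d → ℂ)).symm (fun l => (starRingEnd ℂ) (v (i, l))) with ha
  set u' : EuclideanSpace ℂ (Fin d) := (WithLp.equiv 2 (Fin d → ℂ)).symm u with hu'def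
  have hu0 : u' ≠ 0 := by
    simpa [hu'def] using hu
  have hinner : ∀ i, ⟪a i, u'⟫ = ∑ l, v (i, l) * u l := by
    intro i
    rw [PiLp.inner_apply]
    simp [ha, hu'def]
    exact Finset.sum_congr rfl fun _ _ => mul_comm _ _
  have hBle : ∀ i, ‖⟪a i, u'⟫‖ ≤ ‖a i‖ * ‖u'‖ := fun i => norm_inner_le_norm _ _
  have hex : ∃ i, ‖⟪a i, u'⟫‖ < ‖a i‖ * ‖u'‖ := by
    by_contra hcon
    push_neg at hcon
    have hcol : ∀ i, ∃ c : ℂ, a i = c • u' := by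
      intro i
      rcases eq_or_ne (a i) 0 with h0 | h0
      · exact ⟨0, by simp [h0]⟩
      · have heq : ‖⟪a i, u'⟫‖ = ‖a i‖ * ‖u'‖ := le_antisymm (hBle i) (hcon i)
        obtain ⟨r, hr, hru⟩ := (norm_inner_eq_norm_iff h0 hu0).mp heq
        refine ⟨r⁻¹, ?_⟩
        rw [hru, smul_smul, inv_mul_cancel₀ hr, one_smul]
    obtain ⟨c0, h0⟩ := hcol i0
    obtain ⟨c1, h1⟩ := hcol i1
    apply hm
    have e0 : ∀ l, v (i0, l) = (starRingEnd ℂ) (c0 * u l) := by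
      intro l
      have := congrArg (fun z => z l) h0
      simp [ha, hu'def] at this
      have := congrArg (starRingEnd ℂ) this
      simpa using this
    have e1 : ∀ l, v (i1, l) = (starRingEnd ℂ) (c1 * u l) := by
      intro l
      have := congrArg (fun z => z l) h1
      simp [ha, hu'def] at this
      have := congrArg (starRingEnd ℂ) this
      simpa using this
    rw [e0 l0, e0 l1, e1 l0, e1 l1]
    simp only [_root_.map_mul]
    ring
  obtain ⟨istar, histar⟩ := hex
  have key : ∑ i, ‖⟪a i, u'⟫‖ ^ 2 < ∑ i, ‖a i‖ ^ 2 * ‖u'‖ ^ 2 := by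
    refine Finset.sum_lt_sum (fun i _ => ?_) ⟨istar, Finset.mem_univ istar, ?_⟩
    · calc ‖⟪a i, u'⟫‖ ^ 2 ≤ (‖a i‖ * ‖u'‖) ^ 2 :=
            pow_le_pow_left₀ (norm_nonneg _) (hBle i) 2
        _ = ‖a i‖ ^ 2 * ‖u'‖ ^ 2 := by ring
    · calc ‖⟪a istar, u'⟫‖ ^ 2 < (‖a istar‖ * ‖u'‖) ^ 2 :=
            pow_lt_pow_left₀ histar (norm_nonneg _) (by norm_num)
        _ = ‖a istar‖ ^ 2 * ‖u'‖ ^ 2 := by ring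
  have lhs_eq : ∑ i, ‖⟪a i, u'⟫‖ ^ 2 = ∑ i, ‖∑ l, v (i, l) * u l‖ ^ 2 := by
    refine Finset.sum_congr rfl fun i _ => ?_
    rw [hinner i]
  have rhs_eq : ∑ i, ‖a i‖ ^ 2 * ‖u'‖ ^ 2 =
      (∑ p : Fin d × Fin d, ‖v p‖ ^ 2) * (∑ l, ‖u l‖ ^ 2) := by
    have hnu : ‖u'‖ ^ 2 = ∑ l, ‖u l‖ ^ 2 := by
      rw [euclid_norm_sq]
      refine Finset.sum_congr rfl fun l _ => ?_
      simp [hu'def]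
    have hna : ∀ i, ‖a i‖ ^ 2 = ∑ l, ‖v (i, l)‖ ^ 2 := by
      intro i
      rw [euclid_norm_sq]
      refine Finset.sum_congr rfl fun l _ => ?_
      simp [ha]
    rw [← Finset.sum_mul]
    rw [Fintype.sum_prod_type (f := fun p : Fin d × Fin d => ‖v p‖ ^ 2)]
    rw [hnu]
    congr 1
    exact Finset.sum_congr rfl fun i _ => hna i
  rw [← lhs_eq, ← rhs_eq]
  exact key

end PPTaux4

namespace PPTaux5

variable {d : ℕ}

lemma quad_eq (v y : Fin d × Fin d → ℂ) :
    star y ⬝ᵥ (ptrans (vecMulVec v (star v))) *ᵥ y =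
      ∑ i, ∑ j, (∑ l, v (i, l) * y (j, l)) * (starRingEnd ℂ) (∑ k, v (j, k) * y (i, k)) := by
  have lhs_expand : star y ⬝ᵥ (ptrans (vecMulVec v (star v))) *ᵥ y =
      ∑ i, ∑ k, ∑ j, ∑ l, (starRingEnd ℂ) (y (i, k)) * v (i, l) *
        (starRingEnd ℂ) (v (j, k)) * y (j, l) := by
    rw [dotProduct]
    rw [Fintype.sum_prod_type]
    refine Finset.sum_congr rfl fun i _ => Finset.sum_congr rfl fun k _ => ?_
    rw [mulVec, dotProduct]
    rw [Fintype.sum_prod_type]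
    rw [Finset.mul_sum]
    refine Finset.sum_congr rfl fun j _ => ?_
    rw [Finset.mul_sum]
    refine Finset.sum_congr rfl fun l _ => ?_
    simp only [ptrans, Matrix.of_apply, vecMulVec_apply, Pi.star_apply, RCLike.star_def]
    ring
  rw [lhs_expand]
  have rhs_expand : ∀ i j : Fin d,
      (∑ l, v (i, l) * y (j, l)) * (starRingEnd ℂ) (∑ k, v (j, k) * y (i, k)) =
      ∑ l, ∑ k, v (i, l) * y (j, l) * (starRingEnd ℂ) (v (j, k)) * (starRingEnd ℂ) (y (i, k)) := by
    intro i j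
    rw [map_sum, Finset.sum_mul_sum]
    refine Finset.sum_congr rfl fun l _ => Finset.sum_congr rfl fun k _ => ?_
    rw [_root_.map_mul]
    ring
  calc ∑ i, ∑ k, ∑ j, ∑ l, (starRingEnd ℂ) (y (i, k)) * v (i, l) *
        (starRingEnd ℂ) (v (j, k)) * y (j, l)
      = ∑ i, ∑ j, ∑ l, ∑ k, v (i, l) * y (j, l) * (starRingEnd ℂ) (v (j, k)) *
          (starRingEnd ℂ) (y (i, k)) := by
        refine Finset.sum_congr rfl fun i _ => ?_
        rw [Finset.sum_comm]
        refine Finset.sum_congr rfl fun j _ => ?_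
        rw [Finset.sum_comm]
        refine Finset.sum_congr rfl fun l _ => Finset.sum_congr rfl fun k _ => ?_
        ring
    _ = ∑ i, ∑ j, (∑ l, v (i, l) * y (j, l)) * (starRingEnd ℂ) (∑ k, v (j, k) * y (i, k)) := by
        refine Finset.sum_congr rfl fun i _ => Finset.sum_congr rfl fun j _ => ?_
        rw [rhs_expand i j]

lemma re_sum_le (v y : Fin d × Fin d → ℂ) :
    (∑ i, ∑ j, (∑ l, v (i, l) * y (j, l)) * (starRingEnd ℂ) (∑ k, v (j, k) * y (i, k))).re ≤
      ∑ j, ∑ i, ‖∑ l, v (i, l) * y (j, l)‖ ^ 2 := by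
  set A : Fin d → Fin d → ℂ := fun i j => ∑ l, v (i, l) * y (j, l) with hA
  have hre : (∑ i, ∑ j, A i j * (starRingEnd ℂ) (A j i)).re =
      ∑ i, ∑ j, (A i j * (starRingEnd ℂ) (A j i)).re := by
    rw [Complex.re_sum]
    exact Finset.sum_congr rfl fun i _ => Complex.re_sum _ _
  rw [hre]
  have step : ∀ i j, (A i j * (starRingEnd ℂ) (A j i)).re ≤
      (‖A i j‖ ^ 2 + ‖A j i‖ ^ 2) / 2 := by
    intro i j
    have h1 : (A i j * (starRingEnd ℂ) (A j i)).re ≤ ‖A i j‖ * ‖A j i‖ := by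
      calc (A i j * (starRingEnd ℂ) (A j i)).re ≤ ‖A i j * (starRingEnd ℂ) (A j i)‖ :=
            Complex.re_le_norm _
        _ = ‖A i j‖ * ‖A j i‖ := by
            rw [norm_mul]
            simp
    nlinarith [sq_nonneg (‖A i j‖ - ‖A j i‖)]
  calc ∑ i, ∑ j, (A i j * (starRingEnd ℂ) (A j i)).re
      ≤ ∑ i, ∑ j, (‖A i j‖ ^ 2 + ‖A j i‖ ^ 2) / 2 :=
        Finset.sum_le_sum fun i _ => Finset.sum_le_sum fun j _ => step i j
    _ = ((∑ i, ∑ j, ‖A i j‖ ^ 2) + (∑ i, ∑ j, ‖A j i‖ ^ 2)) / 2 := by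
        simp only [add_div, Finset.sum_div, Finset.sum_add_distrib]
    _ = ∑ j, ∑ i, ‖A i j‖ ^ 2 := by
        rw [Finset.sum_comm (f := fun i j => ‖A j i‖ ^ 2)]
        rw [Finset.sum_comm (f := fun i j => ‖A i j‖ ^ 2)]
        ring

lemma Pquad_lt (v : Fin d × Fin d → ℂ) (hv : ∑ p : Fin d × Fin d, ‖v p‖ ^ 2 = 1)
    (i0 i1 l0 l1 : Fin d)
    (hm : v (i0, l0) * v (i1, l1) - v (i0, l1) * v (i1, l0) ≠ 0)
    (y : Fin d × Fin d → ℂ) (hy : y ≠ 0) :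
    (star y ⬝ᵥ (ptrans (vecMulVec v (star v))) *ᵥ y).re < ∑ p : Fin d × Fin d, ‖y p‖ ^ 2 := by
  rw [quad_eq]
  refine lt_of_le_of_lt (re_sum_le v y) ?_
  have hstep : ∑ j, ∑ i, ‖∑ l, v (i, l) * y (j, l)‖ ^ 2 < ∑ j, ∑ l, ‖y (j, l)‖ ^ 2 := by
    obtain ⟨p0, hp0⟩ : ∃ p, y p ≠ 0 := by
      by_contra hcon
      push_neg at hcon
      exact hy (funext hcon)
    refine Finset.sum_lt_sum (fun j _ => ?_) ⟨p0.1, Finset.mem_univ _, ?_⟩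
    · rcases eq_or_ne (fun l => y (j, l)) 0 with h0 | h0
      · have hz : ∀ l, y (j, l) = 0 := fun l => congrFun h0 l
        simp [hz]
      · have := PPTaux4.rowsum_strict v i0 i1 l0 l1 hm (fun l => y (j, l)) h0
        rw [hv, one_mul] at this
        exact this.le
    · have h0 : (fun l => y (p0.1, l)) ≠ 0 := by
        intro hcon
        exact hp0 (by simpa using congrFun hcon p0.2)
      have := PPTaux4.rowsum_strict v i0 i1 l0 l1 hm (fun l => y (p0.1, l)) h0
      rw [hv, one_mul] at this
      exact this
  refine lt_of_lt_of_le hstep ?_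
  rw [Fintype.sum_prod_type (f := fun p : Fin d × Fin d => ‖y p‖ ^ 2)]

end PPTaux5

namespace PPTaux6

variable {d : ℕ}

lemma quad_expand {m : Type*} [Fintype m] (w : Matrix m m ℂ) (x g : m → ℂ) (t : ℝ) :
    star (x + (t : ℂ) • g) ⬝ᵥ w *ᵥ (x + (t : ℂ) • g) =
      (star x ⬝ᵥ w *ᵥ x) + (t : ℂ) * ((star g ⬝ᵥ w *ᵥ x) + (star x ⬝ᵥ w *ᵥ g)) +
        (t : ℂ) ^ 2 * (star g ⬝ᵥ w *ᵥ g) := by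
  have hstar : star (x + (t : ℂ) • g) = star x + (t : ℂ) • star g := by
    rw [star_add, star_smul]
    simp [Complex.star_def, Complex.conj_ofReal]
  rw [hstar, mulVec_add, mulVec_smul]
  simp only [add_dotProduct, dotProduct_add, smul_dotProduct, dotProduct_smul, smul_eq_mul]
  ring

lemma smul_quad_re {m : Type*} [Fintype m] (w : Matrix m m ℂ) (x : m → ℂ) (r : ℝ) :
    (star ((r : ℂ) • x) ⬝ᵥ w *ᵥ ((r : ℂ) • x)).re = r ^ 2 * (star x ⬝ᵥ w *ᵥ x).re := by
  have hstar : star ((r : ℂ) • x) = (r : ℂ) • star x := by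
    rw [star_smul]
    simp [Complex.star_def, Complex.conj_ofReal]
  rw [hstar, mulVec_smul]
  simp only [smul_dotProduct, dotProduct_smul, smul_eq_mul]
  rw [← mul_assoc, ← Complex.ofReal_mul, Complex.re_ofReal_mul]
  ring

lemma exists_good_vector (hd : 2 ≤ d) (w : Matrix (Fin d × Fin d) (Fin d × Fin d) ℂ)
    (hxw : ∃ x, (star x ⬝ᵥ w *ᵥ x).re < 0) :
    ∃ v : Fin d × Fin d → ℂ, (∑ p : Fin d × Fin d, ‖v p‖ ^ 2 = 1) ∧
      (star v ⬝ᵥ w *ᵥ v).re < 0 ∧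
      ∃ i0 i1 l0 l1 : Fin d,
        v (i0, l0) * v (i1, l1) - v (i0, l1) * v (i1, l0) ≠ 0 := by
  obtain ⟨x₀, hx₀⟩ := hxw
  have h0d : 0 < d := by omega
  have h1d : 1 < d := by omega
  set i0 : Fin d := ⟨0, h0d⟩
  set i1 : Fin d := ⟨1, h1d⟩
  have hi01 : i0 ≠ i1 := by
    intro h
    have := congrArg Fin.val h
    simp [i0, i1] at this
  set g : Fin d × Fin d → ℂ := fun p => if p = (i0, i0) ∨ p = (i1, i1) then 1 else 0 with hg
  -- the quadratic coefficients
  set qA : ℂ := star x₀ ⬝ᵥ w *ᵥ x₀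
  set qB : ℂ := (star g ⬝ᵥ w *ᵥ x₀) + (star x₀ ⬝ᵥ w *ᵥ g)
  set qC : ℂ := star g ⬝ᵥ w *ᵥ g
  set K : ℝ := |qB.re| + |qC.re| + 1 with hK
  have hKpos : 0 < K := by positivity
  set T : ℝ := min 1 ((-qA.re) / (2 * K)) with hT
  have hTpos : 0 < T := by
    apply lt_min one_pos
    apply div_pos (by linarith) (by linarith)
  have hT1 : T ≤ 1 := min_le_left _ _
  have hT2 : T ≤ (-qA.re) / (2 * K) := min_le_right _ _
  -- negativity of the quadratic form along the segment
  have hneg : ∀ t : ℝ, 0 < t → t ≤ T →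
      (star (x₀ + (t : ℂ) • g) ⬝ᵥ w *ᵥ (x₀ + (t : ℂ) • g)).re < 0 := by
    intro t ht0 htT
    rw [quad_expand]
    have hre : ((qA + (t : ℂ) * qB + (t : ℂ) ^ 2 * qC)).re
        = qA.re + t * qB.re + t ^ 2 * qC.re := by
      simp only [Complex.add_re, Complex.mul_re, Complex.ofReal_re, Complex.ofReal_im,
        Complex.mul_im, pow_two]
      ring
    rw [hre]
    have ht1 : t ≤ 1 := le_trans htT hT1
    have htsq : t ^ 2 ≤ t := by nlinarith
    have h1 : t * qB.re ≤ t * |qB.re| := by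
      apply mul_le_mul_of_nonneg_left (le_abs_self _) ht0.le
    have h2 : t ^ 2 * qC.re ≤ t * |qC.re| := by
      calc t ^ 2 * qC.re ≤ t ^ 2 * |qC.re| :=
            mul_le_mul_of_nonneg_left (le_abs_self _) (by positivity)
        _ ≤ t * |qC.re| := mul_le_mul_of_nonneg_right htsq (abs_nonneg _)
    have hTK : T * K ≤ (-qA.re) / 2 := by
      calc T * K ≤ ((-qA.re) / (2 * K)) * K := mul_le_mul_of_nonneg_right hT2 hKpos.le
        _ = (-qA.re) / 2 := by field_simp
    nlinarith [mul_le_mul_of_nonneg_right htT hKpos.le]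
  -- the minor polynomial cannot vanish at three distinct points
  set a : ℂ := x₀ (i0, i0)
  set b : ℂ := x₀ (i1, i1)
  set c : ℂ := x₀ (i0, i1)
  set e : ℂ := x₀ (i1, i0)
  have hgvals : g (i0, i0) = 1 ∧ g (i1, i1) = 1 ∧ g (i0, i1) = 0 ∧ g (i1, i0) = 0 := by
    refine ⟨by simp [hg], by simp [hg], ?_, ?_⟩ <;>
      simp [hg, Prod.ext_iff, hi01, hi01.symm]
  have hminor : ∀ t : ℝ,
      (x₀ + (t : ℂ) • g) (i0, i0) * (x₀ + (t : ℂ) • g) (i1, i1) -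
        (x₀ + (t : ℂ) • g) (i0, i1) * (x₀ + (t : ℂ) • g) (i1, i0)
      = (a + t) * (b + t) - c * e := by
    intro t
    simp only [Pi.add_apply, Pi.smul_apply, smul_eq_mul, hgvals.1, hgvals.2.1,
      hgvals.2.2.1, hgvals.2.2.2]
    ring
  -- pick one of T/2, T/3, T/4 where the minor is nonzero
  have hpoly : ∃ t : ℝ, 0 < t ∧ t ≤ T ∧ (a + t) * (b + t) - c * e ≠ 0 := by
    by_contra hcon
    push_neg at hcon
    have h2 := hcon (T / 2) (by linarith) (by linarith)
    have h3 := hcon (T / 3) (by linarith) (by linarith)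
    have h4 := hcon (T / 4) (by linarith) (by linarith)
    -- f(t) = t^2 + (a+b) t + (ab - ce)
    have key : ∀ s u : ℝ, ((a + s) * (b + s) - c * e = 0) →
        ((a + u) * (b + u) - c * e = 0) → (s : ℂ) ≠ u → a + b = -(s + u) := by
      intro s u hs hu hsu
      have hdiff : ((s : ℂ) - u) * ((s + u) + (a + b)) = 0 := by
        have := sub_eq_zero.mpr (hs.trans hu.symm)
        ring_nf at this ⊢
        linear_combination hs - hu
      rcases mul_eq_zero.mp hdiff with h | h
      · exact absurd (sub_eq_zero.mp h) hsu
      · linear_combination h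
    have hne23 : ((T / 2 : ℝ) : ℂ) ≠ ((T / 3 : ℝ) : ℂ) := by
      rw [Ne, Complex.ofReal_inj]
      intro h; nlinarith
    have hne24 : ((T / 2 : ℝ) : ℂ) ≠ ((T / 4 : ℝ) : ℂ) := by
      rw [Ne, Complex.ofReal_inj]
      intro h; nlinarith
    have k1 := key (T / 2) (T / 3) h2 h3 hne23
    have k2 := key (T / 2) (T / 4) h2 h4 hne24
    have : ((T / 3 : ℝ) : ℂ) = ((T / 4 : ℝ) : ℂ) := by
      have := k1.symm.trans k2
      have h' := neg_injective this
      push_cast at h' ⊢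
      linear_combination h'
    rw [Complex.ofReal_inj] at this
    nlinarith
  obtain ⟨t, ht0, htT, htm⟩ := hpoly
  set x : Fin d × Fin d → ℂ := x₀ + (t : ℂ) • g with hx
  have hxq : (star x ⬝ᵥ w *ᵥ x).re < 0 := hneg t ht0 htT
  have hxm : x (i0, i0) * x (i1, i1) - x (i0, i1) * x (i1, i0) ≠ 0 := by
    rw [hx, hminor t]; exact htm
  have hxne : x ≠ 0 := by
    intro h
    rw [h] at hxq
    simp at hxq
  -- normalize
  set S : ℝ := ∑ p : Fin d × Fin d, ‖x p‖ ^ 2 with hS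
  have hSpos : 0 < S := by
    obtain ⟨p, hp⟩ : ∃ p, x p ≠ 0 := by
      by_contra hcon; push_neg at hcon; exact hxne (funext hcon)
    have h1 : 0 < ‖x p‖ ^ 2 := pow_pos (norm_pos_iff.mpr hp) 2
    exact lt_of_lt_of_le h1 (Finset.single_le_sum (f := fun q => ‖x q‖ ^ 2)
      (fun q _ => sq_nonneg _) (Finset.mem_univ p))
  set s : ℝ := Real.sqrt S with hs
  have hspos : 0 < s := Real.sqrt_pos.mpr hSpos
  have hssq : s ^ 2 = S := Real.sq_sqrt hSpos.le
  set v : Fin d × Fin d → ℂ := ((s⁻¹ : ℝ) : ℂ) • x with hv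
  have hvp : ∀ p, v p = ((s⁻¹ : ℝ) : ℂ) * x p := fun p => rfl
  have hnorm : ∀ p, ‖v p‖ ^ 2 = s⁻¹ ^ 2 * ‖x p‖ ^ 2 := by
    intro p
    rw [hvp p]
    rw [norm_mul, Complex.norm_real, Real.norm_eq_abs, abs_of_pos (inv_pos.mpr hspos)]
    ring
  refine ⟨v, ?_, ?_, i0, i1, i0, i1, ?_⟩
  · rw [Finset.sum_congr rfl fun p _ => hnorm p, ← Finset.mul_sum, ← hS]
    rw [inv_pow]
    rw [inv_mul_eq_one₀ (pow_pos hspos 2).ne']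
    exact hssq
  · rw [hv, smul_quad_re]
    have h3 : 0 < s⁻¹ ^ 2 := pow_pos (inv_pos.mpr hspos) 2
    nlinarith
  · rw [hvp, hvp, hvp, hvp]
    intro hcon
    apply hxm
    have hnz : (((s⁻¹ : ℝ) : ℂ)) ≠ 0 :=
      Complex.ofReal_ne_zero.mpr (ne_of_gt (inv_pos.mpr hspos))
    have h2 : (((s⁻¹ : ℝ) : ℂ)) ^ 2 * (x (i0, i0) * x (i1, i1) - x (i0, i1) * x (i1, i0)) = 0 := by
      linear_combination hcon
    rcases mul_eq_zero.mp h2 with h | h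
    · exact absurd h (pow_ne_zero 2 hnz)
    · exact h

end PPTaux6


namespace PPTaux7

variable {m : Type*} [Fintype m]

lemma ptrans_zero {d : ℕ} : ptrans (0 : Matrix (Fin d × Fin d) (Fin d × Fin d) ℂ) = 0 := by
  ext ⟨i, k⟩ ⟨j, l⟩; rfl

lemma vvstar_herm (v : m → ℂ) : (Matrix.vecMulVec v (star v)).IsHermitian := by
  ext p q
  simp [Matrix.vecMulVec_apply, Matrix.conjTranspose_apply, mul_comm]

lemma dot_star_self (x : m → ℂ) :
    star x ⬝ᵥ x = ((∑ p, ‖x p‖ ^ 2 : ℝ) : ℂ) := by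
  rw [dotProduct]
  push_cast
  refine Finset.sum_congr rfl fun p _ => ?_
  simp only [Pi.star_apply, RCLike.star_def]
  rw [mul_comm, Complex.mul_conj]
  rw [Complex.normSq_eq_norm_sq]
  simp

lemma star_dot_conj (v y : m → ℂ) :
    star y ⬝ᵥ v = (starRingEnd ℂ) (star v ⬝ᵥ y) := by
  rw [dotProduct, dotProduct, map_sum]
  refine Finset.sum_congr rfl fun p _ => ?_
  simp only [Pi.star_apply, RCLike.star_def, _root_.map_mul, Complex.conj_conj]
  ring

lemma vvstar_quad (v y : m → ℂ) :
    star y ⬝ᵥ (Matrix.vecMulVec v (star v)) *ᵥ y =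
      (star v ⬝ᵥ y) * ((starRingEnd ℂ) (star v ⬝ᵥ y)) := by
  have hmv : (Matrix.vecMulVec v (star v)) *ᵥ y = (star v ⬝ᵥ y) • v := by
    funext p
    rw [Matrix.mulVec, dotProduct]
    simp only [Matrix.vecMulVec_apply, Pi.smul_apply, smul_eq_mul, dotProduct]
    rw [Finset.sum_mul]
    refine Finset.sum_congr rfl fun q _ => ?_
    simp only [Pi.star_apply]
    ring
  rw [hmv, dotProduct_smul, smul_eq_mul, star_dot_conj]
  rw [Complex.conj_conj]

lemma vvstar_quad_re (v y : m → ℂ) :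
    (star y ⬝ᵥ (Matrix.vecMulVec v (star v)) *ᵥ y).re = ‖star v ⬝ᵥ y‖ ^ 2 := by
  rw [vvstar_quad, Complex.mul_conj, Complex.normSq_eq_norm_sq, Complex.ofReal_re]

lemma euclid_norm_sq' (x : EuclideanSpace ℂ m) : ‖x‖ ^ 2 = ∑ l, ‖x l‖ ^ 2 := by
  rw [EuclideanSpace.norm_eq]
  rw [Real.sq_sqrt (by positivity)]

lemma dot_cs (v y : m → ℂ) :
    ‖star v ⬝ᵥ y‖ ^ 2 ≤ (∑ p, ‖v p‖ ^ 2) * (∑ p, ‖y p‖ ^ 2) := by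
  set v' : EuclideanSpace ℂ m := (WithLp.equiv 2 (m → ℂ)).symm v with hv'
  set y' : EuclideanSpace ℂ m := (WithLp.equiv 2 (m → ℂ)).symm y with hy'
  have hinner : (inner ℂ v' y' : ℂ) = star v ⬝ᵥ y := by
    rw [PiLp.inner_apply, dotProduct]
    refine Finset.sum_congr rfl fun p _ => ?_
    simp [hv', hy', mul_comm]
  calc ‖star v ⬝ᵥ y‖ ^ 2 = ‖(inner ℂ v' y' : ℂ)‖ ^ 2 := by rw [hinner]
    _ ≤ (‖v'‖ * ‖y'‖) ^ 2 :=
        pow_le_pow_left₀ (norm_nonneg _) (norm_inner_le_norm _ _) 2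
    _ = ‖v'‖ ^ 2 * ‖y'‖ ^ 2 := by ring
    _ = (∑ p, ‖v p‖ ^ 2) * (∑ p, ‖y p‖ ^ 2) := by
        rw [euclid_norm_sq', euclid_norm_sq']
        congr 1

lemma matrix_smul_quad (M : Matrix m m ℂ) (x : m → ℂ) (r : ℝ) :
    star x ⬝ᵥ (((r : ℝ) : ℂ) • M) *ᵥ x = ((r : ℝ) : ℂ) * (star x ⬝ᵥ M *ᵥ x) := by
  rw [Matrix.smul_mulVec, dotProduct_smul, smul_eq_mul]

lemma matrix_smul_quad_re (M : Matrix m m ℂ) (x : m → ℂ) (r : ℝ) :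
    (star x ⬝ᵥ (((r : ℝ) : ℂ) • M) *ᵥ x).re = r * (star x ⬝ᵥ M *ᵥ x).re := by
  rw [matrix_smul_quad, Complex.re_ofReal_mul]

lemma quad_one_re [DecidableEq m] (y : m → ℂ) :
    (star y ⬝ᵥ (1 : Matrix m m ℂ) *ᵥ y).re = ∑ p, ‖y p‖ ^ 2 := by
  rw [Matrix.one_mulVec, dot_star_self, Complex.ofReal_re]

lemma psd_re_nonneg {M : Matrix m m ℂ} (hM : M.PosSemidef) (x : m → ℂ) :
    0 ≤ (star x ⬝ᵥ M *ᵥ x).re := by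
  have := hM.dotProduct_mulVec_nonneg x
  rw [Complex.le_def] at this
  simpa using this.1

lemma quad_abs_le (M : Matrix m m ℂ) (x : m → ℂ) :
    |(star x ⬝ᵥ M *ᵥ x).re| ≤ (∑ p, ∑ q, ‖M p q‖) * ∑ p, ‖x p‖ ^ 2 := by
  set S : ℝ := ∑ p, ‖x p‖ ^ 2 with hS
  have hS0 : 0 ≤ S := Finset.sum_nonneg fun p _ => sq_nonneg _
  have hterm : ∀ p q : m, ‖x p‖ * ‖x q‖ ≤ S := by
    intro p q
    have h1 : ‖x p‖ ^ 2 ≤ S :=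
      Finset.single_le_sum (f := fun r => ‖x r‖ ^ 2) (fun r _ => sq_nonneg _)
        (Finset.mem_univ p)
    have h2 : ‖x q‖ ^ 2 ≤ S :=
      Finset.single_le_sum (f := fun r => ‖x r‖ ^ 2) (fun r _ => sq_nonneg _)
        (Finset.mem_univ q)
    nlinarith [norm_nonneg (x p), norm_nonneg (x q)]
  calc |(star x ⬝ᵥ M *ᵥ x).re| ≤ ‖star x ⬝ᵥ M *ᵥ x‖ := by
        exact Complex.abs_re_le_norm _
    _ ≤ ∑ p, ‖(star x) p * (M *ᵥ x) p‖ := norm_sum_le _ _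
    _ ≤ ∑ p, ∑ q, ‖M p q‖ * S := by
        refine Finset.sum_le_sum fun p _ => ?_
        calc ‖(star x) p * (M *ᵥ x) p‖ = ‖x p‖ * ‖(M *ᵥ x) p‖ := by
              simp [norm_mul]
          _ ≤ ‖x p‖ * ∑ q, ‖M p q * x q‖ := by
              apply mul_le_mul_of_nonneg_left (norm_sum_le _ _) (norm_nonneg _)
          _ = ∑ q, ‖x p‖ * (‖M p q‖ * ‖x q‖) := by
              rw [Finset.mul_sum]
              refine Finset.sum_congr rfl fun q _ => by rw [norm_mul]
          _ ≤ ∑ q, ‖M p q‖ * S := by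
              refine Finset.sum_le_sum fun q _ => ?_
              have := hterm p q
              have hM0 : 0 ≤ ‖M p q‖ := norm_nonneg _
              nlinarith [norm_nonneg (x p), norm_nonneg (x q)]
    _ = (∑ p, ∑ q, ‖M p q‖) * S := by
        rw [Finset.sum_mul]
        exact Finset.sum_congr rfl fun p _ => by rw [Finset.sum_mul]

lemma trace_vvstar (v : m → ℂ) :
    (Matrix.vecMulVec v (star v)).trace = ((∑ p, ‖v p‖ ^ 2 : ℝ) : ℂ) := by
  rw [Matrix.trace]
  push_cast
  refine Finset.sum_congr rfl fun p _ => ?_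
  simp only [Matrix.diag_apply, Matrix.vecMulVec_apply, Pi.star_apply, RCLike.star_def]
  rw [Complex.mul_conj, Complex.normSq_eq_norm_sq]
  simp

lemma herm_real_smul {M : Matrix m m ℂ} (hM : M.IsHermitian) (r : ℝ) :
    (((r : ℝ) : ℂ) • M).IsHermitian := by
  unfold Matrix.IsHermitian
  rw [Matrix.conjTranspose_smul, hM.eq]
  congr 1
  simp [Complex.star_def, Complex.conj_ofReal]

end PPTaux7


theorem stmt11 (d n : ℕ) (hd : 2 ≤ d)
    (E : Fin n → Matrix (Fin d × Fin d) (Fin d × Fin d) ℂ)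
    (hEpos : ∀ j, (E j).PosSemidef) (hEsum : (∑ j, E j) = 1)
    (hdetect : ∀ ρ σ : Matrix (Fin d × Fin d) (Fin d × Fin d) ℂ,
      IsState ρ → (ptrans ρ).PosSemidef → IsState σ → ¬ (ptrans σ).PosSemidef →
        ∃ j, (ρ * E j).trace ≠ (σ * E j).trace) :
    ∀ ρ σ : Matrix (Fin d × Fin d) (Fin d × Fin d) ℂ,
      IsState ρ → IsState σ → (∀ j, (ρ * E j).trace = (σ * E j).trace) → ρ = σ := by
  intro ρ σ hρ hσ htr
  by_contra hne
  haveI : Nonempty (Fin d × Fin d) := ⟨(⟨0, by omega⟩, ⟨0, by omega⟩)⟩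
  set Δ := ρ - σ with hΔ
  have hΔne : Δ ≠ 0 := sub_ne_zero.mpr hne
  have hΔh : Δ.IsHermitian := hρ.1.1.sub hσ.1.1
  have hΔtr : Δ.trace = 0 := by rw [hΔ, Matrix.trace_sub, hρ.2, hσ.2, sub_self]
  have hΔE : ∀ j, (Δ * E j).trace = 0 := by
    intro j
    rw [hΔ, Matrix.sub_mul, Matrix.trace_sub, htr j, sub_self]
  set w := ptrans Δ with hw
  have hwh : w.IsHermitian := PPTaux.ptrans_isHermitian hΔh
  have hwtr : w.trace = 0 := by rw [hw, PPTaux.ptrans_trace]; exact hΔtr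
  have hwne : w ≠ 0 := by
    intro h
    apply hΔne
    have h2 := congrArg ptrans h
    rwa [PPTaux.ptrans_ptrans, PPTaux7.ptrans_zero] at h2
  have hwnpsd : ¬ w.PosSemidef := fun h => hwne (PPTaux2.psd_trace_zero h hwtr)
  have hxw : ∃ x, (star x ⬝ᵥ w *ᵥ x).re < 0 := by
    by_contra hcon
    push_neg at hcon
    exact hwnpsd ((PPTaux2.posSemidef_iff_re hwh).mpr hcon)
  obtain ⟨v, hv1, hvw, i0, i1, l0, l1, hminor⟩ := PPTaux6.exists_good_vector hd w hxw
  -- the PPT full-rank state μ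
  set r : ℝ := ((d * d : ℕ) : ℝ) - 1 with hr
  have hd4 : (4 : ℕ) ≤ d * d := by nlinarith
  have hrpos : (0 : ℝ) < r := by
    have h4 : (4 : ℝ) ≤ ((d * d : ℕ) : ℝ) := by exact_mod_cast hd4
    rw [hr]; linarith
  set P := ptrans (Matrix.vecMulVec v (star v)) with hP
  have hPh : P.IsHermitian := PPTaux.ptrans_isHermitian (PPTaux7.vvstar_herm v)
  have h1Ph : ((1 : Matrix (Fin d × Fin d) (Fin d × Fin d) ℂ) - P).IsHermitian :=
    Matrix.isHermitian_one.sub hPh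
  set μ := ((r⁻¹ : ℝ) : ℂ) • ((1 : Matrix (Fin d × Fin d) (Fin d × Fin d) ℂ) - P) with hμ
  have hμh : μ.IsHermitian := PPTaux7.herm_real_smul h1Ph r⁻¹
  have hsub_quad : ∀ y : Fin d × Fin d → ℂ,
      (star y ⬝ᵥ ((1 : Matrix (Fin d × Fin d) (Fin d × Fin d) ℂ) - P) *ᵥ y).re =
        (∑ p : Fin d × Fin d, ‖y p‖ ^ 2) - (star y ⬝ᵥ P *ᵥ y).re := by
    intro y
    rw [Matrix.sub_mulVec, dotProduct_sub, Complex.sub_re, PPTaux7.quad_one_re]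
  have hμpd : μ.PosDef := by
    rw [PPTaux2.posDef_iff_re hμh]
    intro y hy
    rw [hμ, PPTaux7.matrix_smul_quad_re, hsub_quad]
    have hlt := PPTaux5.Pquad_lt v hv1 i0 i1 l0 l1 hminor y hy
    rw [← hP] at hlt
    have : 0 < (∑ p : Fin d × Fin d, ‖y p‖ ^ 2) - (star y ⬝ᵥ P *ᵥ y).re := by linarith
    positivity
  have hPtr : P.trace = 1 := by
    rw [hP, PPTaux.ptrans_trace, PPTaux7.trace_vvstar, hv1]
    norm_num
  have hμtr : μ.trace = 1 := by
    rw [hμ, Matrix.trace_smul, Matrix.trace_sub, hPtr, Matrix.trace_one, smul_eq_mul]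
    have hcard : (Fintype.card (Fin d × Fin d) : ℂ) = ((d * d : ℕ) : ℂ) := by
      simp [Fintype.card_prod]
    rw [hcard]
    have hre : ((d * d : ℕ) : ℂ) - 1 = ((r : ℝ) : ℂ) := by
      rw [hr]; push_cast; ring
    rw [hre, ← Complex.ofReal_mul, inv_mul_cancel₀ hrpos.ne']
    norm_num
  have hμpt : ptrans μ = ((r⁻¹ : ℝ) : ℂ) •
      ((1 : Matrix (Fin d × Fin d) (Fin d × Fin d) ℂ) - Matrix.vecMulVec v (star v)) := by
    rw [hμ, PPTaux.ptrans_smul, PPTaux.ptrans_sub, PPTaux.ptrans_one, hP,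
      PPTaux.ptrans_ptrans]
  have hμptpsd : (ptrans μ).PosSemidef := by
    rw [hμpt]
    have hherm : ((1 : Matrix (Fin d × Fin d) (Fin d × Fin d) ℂ) -
        Matrix.vecMulVec v (star v)).IsHermitian :=
      Matrix.isHermitian_one.sub (PPTaux7.vvstar_herm v)
    rw [PPTaux2.posSemidef_iff_re (PPTaux7.herm_real_smul hherm r⁻¹)]
    intro y
    rw [PPTaux7.matrix_smul_quad_re]
    have hq : (star y ⬝ᵥ ((1 : Matrix (Fin d × Fin d) (Fin d × Fin d) ℂ) -
        Matrix.vecMulVec v (star v)) *ᵥ y).re =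
        (∑ p : Fin d × Fin d, ‖y p‖ ^ 2) - ‖star v ⬝ᵥ y‖ ^ 2 := by
      rw [Matrix.sub_mulVec, dotProduct_sub, Complex.sub_re, PPTaux7.quad_one_re,
        PPTaux7.vvstar_quad_re]
    rw [hq]
    have hcs := PPTaux7.dot_cs v y
    rw [hv1, one_mul] at hcs
    have h0 : 0 ≤ (∑ p : Fin d × Fin d, ‖y p‖ ^ 2) - ‖star v ⬝ᵥ y‖ ^ 2 := by linarith
    positivity
  -- the NPT state σ'
  obtain ⟨c, hcpos, hcpsd⟩ := PPTaux3.exists_psd_sub_smul hμpd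
  set K2 : ℝ := (∑ p : Fin d × Fin d, ∑ q : Fin d × Fin d, ‖Δ p q‖) + 1 with hK2
  have hK2pos : 0 < K2 := by
    have : (0:ℝ) ≤ ∑ p : Fin d × Fin d, ∑ q : Fin d × Fin d, ‖Δ p q‖ :=
      Finset.sum_nonneg fun p _ => Finset.sum_nonneg fun q _ => norm_nonneg _
    rw [hK2]; linarith
  set t2 : ℝ := c / K2 with ht2
  have ht2pos : 0 < t2 := div_pos hcpos hK2pos
  set σ' := μ + ((t2 : ℝ) : ℂ) • Δ with hσ'
  have hσ'h : σ'.IsHermitian := hμh.add (PPTaux7.herm_real_smul hΔh t2)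
  have hσ'quad : ∀ x : Fin d × Fin d → ℂ,
      (star x ⬝ᵥ σ' *ᵥ x).re = (star x ⬝ᵥ μ *ᵥ x).re + t2 * (star x ⬝ᵥ Δ *ᵥ x).re := by
    intro x
    rw [hσ', Matrix.add_mulVec, dotProduct_add, Complex.add_re]
    congr 1
    exact PPTaux7.matrix_smul_quad_re Δ x t2
  have hσ'psd : σ'.PosSemidef := by
    rw [PPTaux2.posSemidef_iff_re hσ'h]
    intro x
    rw [hσ'quad x]
    set S : ℝ := ∑ p : Fin d × Fin d, ‖x p‖ ^ 2 with hSdef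
    have hS0 : 0 ≤ S := Finset.sum_nonneg fun p _ => sq_nonneg _
    have hμsplit : (star x ⬝ᵥ μ *ᵥ x).re =
        (star x ⬝ᵥ (μ - (c : ℂ) • 1) *ᵥ x).re + c * S := by
      have hμeq : μ = (μ - (c : ℂ) • 1) + (c : ℂ) • (1 : Matrix (Fin d × Fin d) (Fin d × Fin d) ℂ) := by
        abel
      calc (star x ⬝ᵥ μ *ᵥ x).re
          = (star x ⬝ᵥ ((μ - (c : ℂ) • 1) + (c : ℂ) • (1 : Matrix (Fin d × Fin d) (Fin d × Fin d) ℂ)) *ᵥ x).re := by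
            rw [← hμeq]
        _ = (star x ⬝ᵥ (μ - (c : ℂ) • 1) *ᵥ x).re +
            (star x ⬝ᵥ ((c : ℂ) • (1 : Matrix (Fin d × Fin d) (Fin d × Fin d) ℂ)) *ᵥ x).re := by
            rw [Matrix.add_mulVec, dotProduct_add, Complex.add_re]
        _ = (star x ⬝ᵥ (μ - (c : ℂ) • 1) *ᵥ x).re + c * S := by
            rw [PPTaux7.matrix_smul_quad_re, PPTaux7.quad_one_re, hSdef]
    have h1 : 0 ≤ (star x ⬝ᵥ (μ - (c : ℂ) • 1) *ᵥ x).re := PPTaux7.psd_re_nonneg hcpsd x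
    have habs := PPTaux7.quad_abs_le Δ x
    rw [← hSdef, ← hK2] at *
    have habs' : |(star x ⬝ᵥ Δ *ᵥ x).re| ≤ (K2 - 1) * S := by
      have : (∑ p : Fin d × Fin d, ∑ q : Fin d × Fin d, ‖Δ p q‖) = K2 - 1 := by
        rw [hK2]; ring
      rwa [this] at habs
    have hlow : -((K2 - 1) * S) ≤ (star x ⬝ᵥ Δ *ᵥ x).re := (abs_le.mp habs').1
    have ht2K : t2 * (K2 - 1) ≤ c := by
      rw [ht2, div_mul_eq_mul_div, div_le_iff₀ hK2pos]
      nlinarith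
    have hkey : -(c * S) ≤ t2 * (star x ⬝ᵥ Δ *ᵥ x).re := by
      have h5 := mul_le_mul_of_nonneg_left hlow ht2pos.le
      have h6 : t2 * ((K2 - 1) * S) ≤ c * S := by
        have := mul_le_mul_of_nonneg_right ht2K hS0
        nlinarith
      nlinarith
    rw [hμsplit]
    linarith
  have hσ'tr : σ'.trace = 1 := by
    have h2 : (((t2 : ℝ) : ℂ) • Δ).trace = 0 := by
      rw [Matrix.trace_smul, hΔtr, smul_zero]
    rw [hσ', Matrix.trace_add, hμtr, h2, add_zero]
  have hσ'pt : ptrans σ' = ptrans μ + ((t2 : ℝ) : ℂ) • w := by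
    have h2 : ptrans (((t2 : ℝ) : ℂ) • Δ) = ((t2 : ℝ) : ℂ) • w := by
      rw [PPTaux.ptrans_smul, hw]
    rw [hσ', PPTaux.ptrans_add, h2]
  have hvquad0 : (star v ⬝ᵥ (ptrans μ) *ᵥ v).re = 0 := by
    rw [hμpt, PPTaux7.matrix_smul_quad_re]
    have hvv : star v ⬝ᵥ v = 1 := by
      rw [PPTaux7.dot_star_self, hv1]; norm_num
    have hq : (star v ⬝ᵥ ((1 : Matrix (Fin d × Fin d) (Fin d × Fin d) ℂ) -
        Matrix.vecMulVec v (star v)) *ᵥ v).re =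
        (∑ p : Fin d × Fin d, ‖v p‖ ^ 2) - ‖star v ⬝ᵥ v‖ ^ 2 := by
      rw [Matrix.sub_mulVec, dotProduct_sub, Complex.sub_re, PPTaux7.quad_one_re,
        PPTaux7.vvstar_quad_re]
    rw [hq, hvv, hv1]
    norm_num
  have hσ'npt : ¬ (ptrans σ').PosSemidef := by
    intro hpsd
    have h0 := PPTaux7.psd_re_nonneg hpsd v
    rw [hσ'pt, Matrix.add_mulVec, dotProduct_add, Complex.add_re, hvquad0,
      PPTaux7.matrix_smul_quad_re] at h0
    nlinarith
  obtain ⟨j, hj⟩ := hdetect μ σ' ⟨hμpd.posSemidef, hμtr⟩ hμptpsd ⟨hσ'psd, hσ'tr⟩ hσ'npt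
  apply hj
  have h2 : ((((t2 : ℝ) : ℂ) • Δ) * E j).trace = 0 := by
    rw [smul_mul_assoc, Matrix.trace_smul, hΔE j, smul_zero]
  rw [hσ', Matrix.add_mul, Matrix.trace_add, h2, add_zero]

end
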